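/- Pathwise Gronwall bound for perturbed linear-growth integral equations: Let t₀ ∈ [0,1], η ∈ ℝ, k, M ≥ 0, let w : [t₀,1] → ℝ be continuous with w(t₀) = 0, let g : [t₀,1] → ℝ be integrable with |g(u)| ≤ k(1+|x(u)|) + M for almost every u, and let x : [t₀,1] → ℝ be continuous with x(t) = η + ∫_{t₀}^t g(u) du + w(t) for all t ∈ [t₀,1]. Then sup_{t₀ ≤ t ≤ 1} |x(t)|² ≤ (4|η|² + 8k² + 4M² + 4 sup_{t₀ ≤ t ≤ 1} |w(t)|²) · e^{8k²}. -/

import Mathlib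

open MeasureTheory Set

set_option maxHeartbeats 1000000

lemma contOn_ii {f : ℝ → ℝ} {a b : ℝ} (hab : a ≤ b) (hf : ContinuousOn f (Icc a b)) :
    IntervalIntegrable f volume a b := by
  apply ContinuousOn.intervalIntegrable
  rwa [uIcc_of_le hab]

/-- Cauchy–Schwarz for interval integrals of continuous functions. -/
lemma cs_aux {f : ℝ → ℝ} {a b : ℝ} (hab : a ≤ b) (hf : ContinuousOn f (Icc a b)) :
    (∫ u in a..b, f u) ^ 2 ≤ (b - a) * ∫ u in a..b, (f u) ^ 2 := by
  rcases eq_or_lt_of_le hab with rfl | hlt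
  · simp
  have hT0 : 0 < b - a := sub_pos.mpr hlt
  have hfi : IntervalIntegrable f volume a b := contOn_ii hab hf
  have hfi2 : IntervalIntegrable (fun u => (f u) ^ 2) volume a b := contOn_ii hab (hf.pow 2)
  set I := ∫ u in a..b, f u with hI
  set J := ∫ u in a..b, (f u) ^ 2 with hJ
  set c := I / (b - a) with hc
  have h0 : 0 ≤ ∫ u in a..b, (f u - c) ^ 2 :=
    intervalIntegral.integral_nonneg hab fun u _ => sq_nonneg _
  have hexp : (∫ u in a..b, (f u - c) ^ 2) = J - 2 * c * I + c ^ 2 * (b - a) := by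
    have : ∀ u : ℝ, (f u - c) ^ 2 = ((f u) ^ 2 - 2 * c * f u) + c ^ 2 := fun u => by ring
    simp_rw [this]
    rw [intervalIntegral.integral_add (hfi2.sub ((hfi.const_mul (2 * c)))) intervalIntegrable_const,
      intervalIntegral.integral_sub hfi2 (hfi.const_mul (2 * c)),
      intervalIntegral.integral_const_mul, intervalIntegral.integral_const]
    simp only [smul_eq_mul, ← hI, ← hJ]
    ring
  rw [hexp] at h0
  have hcT : c * (b - a) = I := by rw [hc, div_mul_cancel₀ _ hT0.ne']
  nlinarith [h0, hcT, hT0, mul_le_mul_of_nonneg_left h0 hT0.le]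

/-- **Pathwise Gronwall bound for perturbed linear-growth integral equations.**
If `x t = η + ∫_{t₀}^t g(u) du + w t` on `[t₀,1]`, with `|g u| ≤ k (1 + |x u|) + M` a.e.,
`w` continuous with `w t₀ = 0`, then
`sup_{t₀ ≤ t ≤ 1} |x t|² ≤ (4|η|² + 8k² + 4M² + 4 sup |w|²) e^{8k²}`. -/
theorem pathwise_gronwall_bound
    (t₀ : ℝ) (ht₀ : t₀ ∈ Icc (0 : ℝ) 1) (η k M : ℝ) (hk : 0 ≤ k) (hM : 0 ≤ M)
    (w : ℝ → ℝ) (hw : ContinuousOn w (Icc t₀ 1)) (hw0 : w t₀ = 0)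
    (g : ℝ → ℝ) (hgint : IntegrableOn g (Icc t₀ 1))
    (x : ℝ → ℝ) (hx : ContinuousOn x (Icc t₀ 1))
    (hg : ∀ᵐ u ∂(volume.restrict (Icc t₀ 1)), |g u| ≤ k * (1 + |x u|) + M)
    (heq : ∀ t ∈ Icc t₀ 1, x t = η + (∫ u in t₀..t, g u) + w t) :
    (⨆ t : Icc t₀ 1, |x (t : ℝ)| ^ 2) ≤
      (4 * |η| ^ 2 + 8 * k ^ 2 + 4 * M ^ 2 + 4 * ⨆ t : Icc t₀ 1, |w (t : ℝ)| ^ 2) *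
        Real.exp (8 * k ^ 2) := by
  have ht01 : t₀ ≤ 1 := ht₀.2
  haveI : Nonempty (Icc t₀ 1) := ⟨⟨t₀, le_rfl, ht01⟩⟩
  set S := ⨆ t : Icc t₀ 1, |w (t : ℝ)| ^ 2 with hSdef
  have hwc2 : ContinuousOn (fun u => |w u| ^ 2) (Icc t₀ 1) := (hw.abs.pow 2)
  have hbddw : BddAbove (Set.range fun t : Icc t₀ 1 => |w (t : ℝ)| ^ 2) := by
    have h := (isCompact_Icc.image_of_continuousOn hwc2).bddAbove
    rw [Set.image_eq_range] at h
    exact h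
  have hS : ∀ t ∈ Icc t₀ 1, |w t| ^ 2 ≤ S := fun t ht => le_ciSup hbddw (⟨t, ht⟩ : Icc t₀ 1)
  have hS0 : 0 ≤ S := le_trans (sq_nonneg _) (hS t₀ ⟨le_rfl, ht01⟩)
  set A := 4 * |η| ^ 2 + 8 * k ^ 2 + 4 * M ^ 2 + 4 * S with hAdef
  set B := 8 * k ^ 2 with hBdef
  have hA0 : 0 ≤ A := by positivity
  have hB0 : 0 ≤ B := by positivity
  set X := fun u : ℝ => |x u| ^ 2 with hXdef
  have hXc : ContinuousOn X (Icc t₀ 1) := hx.abs.pow 2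
  have hXint : IntegrableOn X (Icc t₀ 1) := hXc.integrableOn_compact isCompact_Icc
  set φ := fun t : ℝ => ∫ u in t₀..t, X u with hφdef
  have hφnn : ∀ t ∈ Icc t₀ 1, 0 ≤ φ t := fun t ht =>
    intervalIntegral.integral_nonneg ht.1 fun u _ => sq_nonneg _
  -- Step 1: pointwise bound |x t|² ≤ A + B φ t
  have hbound : ∀ t ∈ Icc t₀ 1, X t ≤ A + B * φ t := by
    rintro t ⟨ht1, ht2⟩
    have hsub : Icc t₀ t ⊆ Icc t₀ 1 := Icc_subset_Icc_right ht2
    have hx' : ContinuousOn x (Icc t₀ t) := hx.mono hsub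
    have hgi : IntervalIntegrable g volume t₀ t := by
      apply IntegrableOn.intervalIntegrable
      rw [uIcc_of_le ht1]
      exact hgint.mono_set hsub
    have hgai : IntervalIntegrable (fun u => |g u|) volume t₀ t := hgi.abs
    have hbc : ContinuousOn (fun u => k * (1 + |x u|) + M) (Icc t₀ t) :=
      ((continuousOn_const.mul (continuousOn_const.add hx'.abs)).add continuousOn_const)
    have hbi : IntervalIntegrable (fun u => k * (1 + |x u|) + M) volume t₀ t :=
      contOn_ii ht1 hbc
    have h1c : ContinuousOn (fun u => 1 + |x u|) (Icc t₀ t) := continuousOn_const.add hx'.abs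
    have h1i : IntervalIntegrable (fun u => 1 + |x u|) volume t₀ t := contOn_ii ht1 h1c
    have h2i : IntervalIntegrable (fun u => (1 + |x u|) ^ 2) volume t₀ t :=
      contOn_ii ht1 (h1c.pow 2)
    have h3i : IntervalIntegrable (fun u => 2 + 2 * |x u| ^ 2) volume t₀ t :=
      contOn_ii ht1 (continuousOn_const.add (continuousOn_const.mul (hx'.abs.pow 2)))
    have hgae : ∀ᵐ u ∂(volume.restrict (Icc t₀ t)), |g u| ≤ k * (1 + |x u|) + M :=
      ae_restrict_of_ae_restrict_of_subset hsub hg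
    have habs : |∫ u in t₀..t, g u| ≤ ∫ u in t₀..t, k * (1 + |x u|) + M :=
      le_trans (intervalIntegral.abs_integral_le_integral_abs ht1)
        (intervalIntegral.integral_mono_ae_restrict ht1 hgai hbi hgae)
    have hdecomp : (∫ u in t₀..t, k * (1 + |x u|) + M)
        = k * (∫ u in t₀..t, 1 + |x u|) + M * (t - t₀) := by
      rw [intervalIntegral.integral_add (h1i.const_mul k) intervalIntegrable_const,
        intervalIntegral.integral_const_mul, intervalIntegral.integral_const, smul_eq_mul,
        mul_comm (t - t₀) M]
    set P := ∫ u in t₀..t, 1 + |x u| with hPdef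
    have hcs : P ^ 2 ≤ (t - t₀) * ∫ u in t₀..t, (1 + |x u|) ^ 2 := cs_aux ht1 h1c
    have hmono2 : (∫ u in t₀..t, (1 + |x u|) ^ 2) ≤ ∫ u in t₀..t, 2 + 2 * |x u| ^ 2 :=
      intervalIntegral.integral_mono_on ht1 h2i h3i (fun u _ => by nlinarith [sq_nonneg (1 - |x u|)])
    have hint3 : (∫ u in t₀..t, 2 + 2 * |x u| ^ 2) = 2 * (t - t₀) + 2 * φ t := by
      have hXi : IntervalIntegrable X volume t₀ t := by
        apply IntegrableOn.intervalIntegrable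
        rw [uIcc_of_le ht1]
        exact hXint.mono_set hsub
      rw [intervalIntegral.integral_add intervalIntegrable_const (hXi.const_mul 2),
        intervalIntegral.integral_const_mul, intervalIntegral.integral_const, smul_eq_mul]
      ring
    have htT0 : 0 ≤ t - t₀ := sub_nonneg.mpr ht1
    have htT1 : t - t₀ ≤ 1 := by linarith [ht₀.1]
    have hφt : 0 ≤ φ t := hφnn t ⟨ht1, ht2⟩
    have hI2nn : 0 ≤ ∫ u in t₀..t, (1 + |x u|) ^ 2 :=
      intervalIntegral.integral_nonneg ht1 fun u _ => sq_nonneg _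
    have hP2 : P ^ 2 ≤ 2 + 2 * φ t := by nlinarith [hcs, hmono2, hint3]
    have hPnn : 0 ≤ P := intervalIntegral.integral_nonneg ht1
      (fun u _ => by positivity)
    have hxt : |x t| ≤ |η| + (k * P + M * (t - t₀)) + |w t| := by
      rw [heq t ⟨ht1, ht2⟩]
      calc |η + (∫ u in t₀..t, g u) + w t|
          ≤ |η + (∫ u in t₀..t, g u)| + |w t| := abs_add_le _ _
        _ ≤ |η| + |∫ u in t₀..t, g u| + |w t| := by linarith [abs_add_le η (∫ u in t₀..t, g u)]
        _ ≤ |η| + (k * P + M * (t - t₀)) + |w t| := by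
            rw [hdecomp] at habs; linarith
    have hsq : |x t| ^ 2 ≤ (|η| + (k * P + M * (t - t₀)) + |w t|) ^ 2 := by
      have hrhs : 0 ≤ |η| + (k * P + M * (t - t₀)) + |w t| := by positivity
      nlinarith [abs_nonneg (x t)]
    have h4 : (|η| + (k * P + M * (t - t₀)) + |w t|) ^ 2
        ≤ 4 * |η| ^ 2 + 4 * (k * P) ^ 2 + 4 * (M * (t - t₀)) ^ 2 + 4 * |w t| ^ 2 := by
      nlinarith [sq_nonneg (|η| - k * P), sq_nonneg (|η| - M * (t - t₀)),
        sq_nonneg (|η| - |w t|), sq_nonneg (k * P - M * (t - t₀)),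
        sq_nonneg (k * P - |w t|), sq_nonneg (M * (t - t₀) - |w t|)]
    have hb2 : (k * P) ^ 2 ≤ k ^ 2 * (2 + 2 * φ t) := by
      have := mul_le_mul_of_nonneg_left hP2 (sq_nonneg k)
      nlinarith
    have hc2 : (M * (t - t₀)) ^ 2 ≤ M ^ 2 := by
      have hτ : (t - t₀) ^ 2 ≤ 1 := by nlinarith
      nlinarith [sq_nonneg M]
    have hd2 : |w t| ^ 2 ≤ S := hS t ⟨ht1, ht2⟩
    simp only [hXdef, hAdef, hBdef]
    nlinarith
  -- Step 2: Gronwall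
  have hφc : ContinuousOn φ (Icc t₀ 1) := by
    have := intervalIntegral.continuousOn_primitive_interval (a := t₀) (b := 1) (μ := volume)
      (f := X) (by rwa [uIcc_of_le ht01])
    rwa [uIcc_of_le ht01] at this
  have hφd : ∀ t ∈ Ico t₀ 1, HasDerivWithinAt φ (X t) (Ici t) t := by
    rintro t ⟨ht1, ht2⟩
    have hsub : Icc t 1 ⊆ Icc t₀ 1 := Icc_subset_Icc ht1 le_rfl
    have hfi : IntervalIntegrable X volume t₀ t := by
      apply IntegrableOn.intervalIntegrable
      rw [uIcc_of_le ht1]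
      exact hXint.mono_set (Icc_subset_Icc_right ht2.le)
    haveI : Fact (t ∈ Icc t 1) := ⟨⟨le_rfl, ht2.le⟩⟩
    have hmeas : StronglyMeasurableAtFilter X (nhdsWithin t (Icc t 1)) volume :=
      (hXc.mono hsub).stronglyMeasurableAtFilter_nhdsWithin measurableSet_Icc t
    have hcw : ContinuousWithinAt X (Icc t 1) t := (hXc.mono hsub) t ⟨le_rfl, ht2.le⟩
    have h : HasDerivWithinAt φ (X t) (Icc t 1) t :=
      intervalIntegral.integral_hasDerivWithinAt_right hfi hmeas hcw
    exact h.mono_of_mem_nhdsWithin (by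
      rw [← Ici_inter_Iic]; exact inter_mem_nhdsWithin _ (Iic_mem_nhds ht2))
  have hG : ∀ t ∈ Icc t₀ 1, ‖φ t‖ ≤ gronwallBound 0 B A (t - t₀) := by
    apply norm_le_gronwallBound_of_norm_deriv_right_le hφc hφd
    · simp [hφdef]
    · rintro t ht
      have ht' : t ∈ Icc t₀ 1 := ⟨ht.1, ht.2.le⟩
      have h1 := hbound t ht'
      have h2 := hφnn t ht'
      rw [Real.norm_eq_abs, Real.norm_eq_abs, abs_of_nonneg (sq_nonneg _), abs_of_nonneg h2]
      linarith
  -- Conclusion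
  apply ciSup_le
  rintro ⟨t, ht⟩
  have hφle : φ t ≤ gronwallBound 0 B A (t - t₀) := by
    have := hG t ht
    rwa [Real.norm_eq_abs, abs_of_nonneg (hφnn t ht)] at this
  have hfin : X t ≤ A * Real.exp B := by
    have h1 := hbound t ht
    have htT : B * (t - t₀) ≤ B := by nlinarith [ht.1, ht.2, ht₀.1, hB0]
    by_cases hk0 : k = 0
    · have hB : B = 0 := by simp [hBdef, hk0]
      have : gronwallBound 0 B A (t - t₀) = A * (t - t₀) := by
        rw [hB, gronwallBound_K0]; ring
      rw [hB] at h1 ⊢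
      simpa using h1.trans (by nlinarith [Real.exp_pos (0:ℝ)])
    · have hBne : B ≠ 0 := by
        simp only [hBdef]; positivity
      have hBpos : 0 < B := lt_of_le_of_ne hB0 (Ne.symm hBne)
      have hgb : gronwallBound 0 B A (t - t₀)
          = A / B * (Real.exp (B * (t - t₀)) - 1) := by
        rw [gronwallBound_of_K_ne_0 hBne]; ring
      have hexple : Real.exp (B * (t - t₀)) ≤ Real.exp B := Real.exp_le_exp.mpr htT
      calc X t ≤ A + B * φ t := h1
        _ ≤ A + B * (A / B * (Real.exp (B * (t - t₀)) - 1)) := by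
            rw [← hgb]; nlinarith [hφle]
        _ = A * Real.exp (B * (t - t₀)) := by field_simp; ring
        _ ≤ A * Real.exp B := by nlinarith [Real.exp_pos (B * (t - t₀))]
  simpa [hXdef, hAdef, hBdef] using hfin
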